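/- 1ReachU is not contained in 1U; that is, there exists a family of promise problems belonging to 1ReachU that does not belong to 1U. -/

import Mathlib

/-! ## One-way nondeterministic finite automata -/

structure OneNFA (α : Type) : Type 1 where
  Q : Type
  [finQ : Fintype Q]
  start : Q
  next : Q → α → Set Q
  next_nonempty : ∀ q a, (next q a).Nonempty
  acc : Set Q

attribute [instance] OneNFA.finQ

namespace OneNFA

variable {α : Type}

/-- The state complexity (number of inner states). -/
def sc (M : OneNFA α) : ℕ := Fintype.card M.Q

/-- `p` is a computation path of `M` on input `x`. -/
def IsPath (M : OneNFA α) (x : List α) (p : Fin (x.length + 1) → M.Q) : Prop :=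
  p 0 = M.start ∧ ∀ i : Fin x.length, p i.succ ∈ M.next (p i.castSucc) (x.get i)

/-- `p` is an accepting computation path of `M` on input `x`. -/
def IsAccPath (M : OneNFA α) (x : List α) (p : Fin (x.length + 1) → M.Q) : Prop :=
  M.IsPath x p ∧ p (Fin.last x.length) ∈ M.acc

def Accepts (M : OneNFA α) (x : List α) : Prop := ∃ p, M.IsAccPath x p

/-- `M` is a 1dfa: every transition set is a singleton. -/
def Deterministic (M : OneNFA α) : Prop := ∀ q a, ∃ q', M.next q a = {q'}

end OneNFA

/-! ## Families of promise problems -/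

structure PromiseFamily (α : Type) where
  pos : ℕ → Set (List α)
  neg : ℕ → Set (List α)
  disj : ∀ n, Disjoint (pos n) (neg n)

namespace PromiseFamily

def valid {α : Type} (L : PromiseFamily α) (n : ℕ) : Set (List α) := L.pos n ∪ L.neg n

def co {α : Type} (L : PromiseFamily α) : PromiseFamily α :=
  ⟨L.neg, L.pos, fun n => (L.disj n).symm⟩

end PromiseFamily

/-- A family of promise problems over some finite alphabet. -/
structure Family : Type 1 where
  alph : Type
  [finA : Fintype alph]
  prob : PromiseFamily alph

attribute [instance] Family.finA

def Family.co (F : Family) : Family := { alph := F.alph, prob := F.prob.co }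

/-! ## One-way machine families -/

def Solves1 {α : Type} (M : ℕ → OneNFA α) (L : PromiseFamily α) : Prop :=
  ∀ n, (∀ x ∈ L.pos n, (M n).Accepts x) ∧ (∀ x ∈ L.neg n, ¬ (M n).Accepts x)

def PolySize1 {α : Type} (M : ℕ → OneNFA α) : Prop :=
  ∃ p : Polynomial ℕ, ∀ n, (M n).sc ≤ p.eval n

def Unambiguous1 {α : Type} (M : ℕ → OneNFA α) (L : PromiseFamily α) : Prop :=
  ∀ n, ∀ x ∈ L.valid n, {p | (M n).IsAccPath x p}.Subsingleton

def AcceptFew1 {α : Type} (M : ℕ → OneNFA α) (L : PromiseFamily α) : Prop :=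
  ∃ P : MvPolynomial (Fin 2) ℕ, ∀ n, ∀ x ∈ L.valid n,
    {p | (M n).IsAccPath x p}.ncard ≤ MvPolynomial.eval ![n, x.length] P

def WeaklyUnambiguous1 {α : Type} (M : ℕ → OneNFA α) (L : PromiseFamily α) : Prop :=
  ∀ n, ∀ x ∈ L.valid n, ∀ q : (M n).Q,
    {p | (M n).IsAccPath x p ∧ p (Fin.last x.length) = q}.Subsingleton

def ReachUnambiguous1 {α : Type} (M : ℕ → OneNFA α) (L : PromiseFamily α) : Prop :=
  ∀ n, ∀ x ∈ L.valid n, ∀ i ≤ x.length, ∀ q : (M n).Q,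
    {p : Fin ((x.take i).length + 1) → (M n).Q |
      (M n).IsPath (x.take i) p ∧ p (Fin.last (x.take i).length) = q}.Subsingleton

def ReachFew1 {α : Type} (M : ℕ → OneNFA α) (L : PromiseFamily α) : Prop :=
  ∃ P : MvPolynomial (Fin 2) ℕ, ∀ n, ∀ x ∈ L.valid n, ∀ i ≤ x.length, ∀ q : (M n).Q,
    {p : Fin ((x.take i).length + 1) → (M n).Q |
      (M n).IsPath (x.take i) p ∧ p (Fin.last (x.take i).length) = q}.ncard ≤
      MvPolynomial.eval ![n, x.length] P

/-! ## One-way nonuniform state complexity classes -/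

def oneN : Set Family :=
  {F | ∃ M : ℕ → OneNFA F.alph, PolySize1 M ∧ Solves1 M F.prob}

def oneD : Set Family :=
  {F | ∃ M : ℕ → OneNFA F.alph, PolySize1 M ∧ (∀ n, (M n).Deterministic) ∧ Solves1 M F.prob}

def oneU : Set Family :=
  {F | ∃ M : ℕ → OneNFA F.alph, PolySize1 M ∧ Unambiguous1 M F.prob ∧ Solves1 M F.prob}

def oneFew : Set Family :=
  {F | ∃ M : ℕ → OneNFA F.alph, PolySize1 M ∧ AcceptFew1 M F.prob ∧ Solves1 M F.prob}

def oneFewU : Set Family :=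
  {F | ∃ M : ℕ → OneNFA F.alph, PolySize1 M ∧ AcceptFew1 M F.prob ∧
        WeaklyUnambiguous1 M F.prob ∧ Solves1 M F.prob}

def oneReachU : Set Family :=
  {F | ∃ M : ℕ → OneNFA F.alph, PolySize1 M ∧ AcceptFew1 M F.prob ∧
        ReachUnambiguous1 M F.prob ∧ Solves1 M F.prob}

def oneReachFew : Set Family :=
  {F | ∃ M : ℕ → OneNFA F.alph, PolySize1 M ∧ AcceptFew1 M F.prob ∧
        ReachFew1 M F.prob ∧ Solves1 M F.prob}

def oneReachFewU : Set Family :=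
  {F | ∃ M : ℕ → OneNFA F.alph, PolySize1 M ∧ AcceptFew1 M F.prob ∧
        ReachFew1 M F.prob ∧ WeaklyUnambiguous1 M F.prob ∧ Solves1 M F.prob}

/-- The complement class `co-C`. -/
def coC (C : Set Family) : Set Family := {F | F.co ∈ C}
/-! ## Two-way nondeterministic finite automata -/

/-- A tape symbol: either an input symbol, the left endmarker `Sum.inr false`,
or the right endmarker `Sum.inr true`. -/
def TapeSym (α : Type) : Type := α ⊕ Bool

/-- The symbol held in cell `i` of the tape containing `▷x◁`. -/
def tapeAt {α : Type} (x : List α) (i : ℕ) : TapeSym α :=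
  if h0 : i = 0 then Sum.inr false
  else if h : i ≤ x.length then Sum.inl (x.get ⟨i - 1, by omega⟩)
  else Sum.inr true

structure TwoNFA (α : Type) : Type 1 where
  Q : Type
  [finQ : Fintype Q]
  start : Q
  acc : Set Q
  rej : Set Q
  acc_rej_disj : Disjoint acc rej
  next : Q → TapeSym α → Set (Q × ℤ)
  next_dir : ∀ q a t, t ∈ next q a → t.2 = -1 ∨ t.2 = 0 ∨ t.2 = 1

attribute [instance] TwoNFA.finQ

namespace TwoNFA

variable {α : Type}

def sc (M : TwoNFA α) : ℕ := Fintype.card M.Q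

def Halting (M : TwoNFA α) (q : M.Q) : Prop := q ∈ M.acc ∨ q ∈ M.rej

/-- Configuration `c` yields configuration `c'` in one step on input `x`. -/
def Yields (M : TwoNFA α) (x : List α) (c c' : M.Q × ℕ) : Prop :=
  ¬ M.Halting c.1 ∧ c.2 ≤ x.length + 1 ∧ c'.2 ≤ x.length + 1 ∧
    ∃ d : ℤ, (c'.1, d) ∈ M.next c.1 (tapeAt x c.2) ∧ (c'.2 : ℤ) = (c.2 : ℤ) + d

/-- A partial computation path of length `k` of `M` on `x`. -/
def IsPartialPath (M : TwoNFA α) (x : List α) (k : ℕ) (p : Fin (k + 1) → M.Q × ℕ) : Prop :=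
  p 0 = (M.start, 0) ∧ ∀ i : Fin k, M.Yields x (p i.castSucc) (p i.succ)

/-- A (full) computation path: the final configuration is the only halting one. -/
def IsCompPath (M : TwoNFA α) (x : List α) (k : ℕ) (p : Fin (k + 1) → M.Q × ℕ) : Prop :=
  M.IsPartialPath x k p ∧ ∀ i : Fin (k + 1), (M.Halting (p i).1 ↔ i = Fin.last k)

def IsAccPath (M : TwoNFA α) (x : List α) (k : ℕ) (p : Fin (k + 1) → M.Q × ℕ) : Prop :=
  M.IsCompPath x k p ∧ (p (Fin.last k)).1 ∈ M.acc

def Accepts (M : TwoNFA α) (x : List α) : Prop := ∃ k p, M.IsAccPath x k p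

def Deterministic (M : TwoNFA α) : Prop := ∀ q a, ∃ t, M.next q a = {t}

/-- The set of accepting computation paths of `M` on `x`. -/
def accPaths (M : TwoNFA α) (x : List α) : Set ((k : ℕ) × (Fin (k + 1) → M.Q × ℕ)) :=
  {kp | M.IsAccPath x kp.1 kp.2}

/-- The set of computation paths of `M` on `x` ending at configuration `conf`. -/
def compPathsTo (M : TwoNFA α) (x : List α) (conf : M.Q × ℕ) :
    Set ((k : ℕ) × (Fin (k + 1) → M.Q × ℕ)) :=
  {kp | M.IsCompPath x kp.1 kp.2 ∧ kp.2 (Fin.last kp.1) = conf}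

/-- The set of partial computation paths of `M` on `x` ending at configuration `conf`. -/
def partialPathsTo (M : TwoNFA α) (x : List α) (conf : M.Q × ℕ) :
    Set ((k : ℕ) × (Fin (k + 1) → M.Q × ℕ)) :=
  {kp | M.IsPartialPath x kp.1 kp.2 ∧ kp.2 (Fin.last kp.1) = conf}

end TwoNFA

/-! ## Two-way machine families -/

def Solves2 {α : Type} (M : ℕ → TwoNFA α) (L : PromiseFamily α) : Prop :=
  ∀ n, (∀ x ∈ L.pos n, (M n).Accepts x) ∧ (∀ x ∈ L.neg n, ¬ (M n).Accepts x)

def PolySize2 {α : Type} (M : ℕ → TwoNFA α) : Prop :=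
  ∃ p : Polynomial ℕ, ∀ n, (M n).sc ≤ p.eval n

def Unambiguous2 {α : Type} (M : ℕ → TwoNFA α) (L : PromiseFamily α) : Prop :=
  ∀ n, ∀ x ∈ L.valid n, ((M n).accPaths x).Subsingleton

def AcceptFew2 {α : Type} (M : ℕ → TwoNFA α) (L : PromiseFamily α) : Prop :=
  ∃ P : MvPolynomial (Fin 2) ℕ, ∀ n, ∀ x ∈ L.valid n,
    ((M n).accPaths x).encard ≤ (MvPolynomial.eval ![n, x.length] P : ℕ∞)

def WeaklyUnambiguous2 {α : Type} (M : ℕ → TwoNFA α) (L : PromiseFamily α) : Prop :=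
  ∀ n, ∀ x ∈ L.valid n, ∀ conf : (M n).Q × ℕ, conf.1 ∈ (M n).acc →
    ((M n).compPathsTo x conf).Subsingleton

def ReachUnambiguous2 {α : Type} (M : ℕ → TwoNFA α) (L : PromiseFamily α) : Prop :=
  ∀ n, ∀ x ∈ L.valid n, ∀ conf : (M n).Q × ℕ,
    ((M n).partialPathsTo x conf).Subsingleton

def ReachFew2 {α : Type} (M : ℕ → TwoNFA α) (L : PromiseFamily α) : Prop :=
  ∃ P : MvPolynomial (Fin 2) ℕ, ∀ n, ∀ x ∈ L.valid n, ∀ conf : (M n).Q × ℕ,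
    ((M n).partialPathsTo x conf).encard ≤ (MvPolynomial.eval ![n, x.length] P : ℕ∞)

/-! ## Two-way nonuniform state complexity classes -/

def twoN : Set Family :=
  {F | ∃ M : ℕ → TwoNFA F.alph, PolySize2 M ∧ Solves2 M F.prob}

def twoD : Set Family :=
  {F | ∃ M : ℕ → TwoNFA F.alph, PolySize2 M ∧ (∀ n, (M n).Deterministic) ∧ Solves2 M F.prob}

def twoU : Set Family :=
  {F | ∃ M : ℕ → TwoNFA F.alph, PolySize2 M ∧ Unambiguous2 M F.prob ∧ Solves2 M F.prob}

def twoFew : Set Family :=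
  {F | ∃ M : ℕ → TwoNFA F.alph, PolySize2 M ∧ AcceptFew2 M F.prob ∧ Solves2 M F.prob}

def twoFewU : Set Family :=
  {F | ∃ M : ℕ → TwoNFA F.alph, PolySize2 M ∧ AcceptFew2 M F.prob ∧
        WeaklyUnambiguous2 M F.prob ∧ Solves2 M F.prob}

def twoReachU : Set Family :=
  {F | ∃ M : ℕ → TwoNFA F.alph, PolySize2 M ∧ AcceptFew2 M F.prob ∧
        ReachUnambiguous2 M F.prob ∧ Solves2 M F.prob}

def twoReachFew : Set Family :=
  {F | ∃ M : ℕ → TwoNFA F.alph, PolySize2 M ∧ AcceptFew2 M F.prob ∧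
        ReachFew2 M F.prob ∧ Solves2 M F.prob}

def twoReachFewU : Set Family :=
  {F | ∃ M : ℕ → TwoNFA F.alph, PolySize2 M ∧ AcceptFew2 M F.prob ∧
        ReachFew2 M F.prob ∧ WeaklyUnambiguous2 M F.prob ∧ Solves2 M F.prob}

/-! ## Ceilings -/

/-- The family `F` has an `f(n)`-ceiling. -/
def HasCeiling (F : Family) (f : ℕ → ℕ) : Prop :=
  ∀ n, ∀ x ∈ F.prob.valid n, x.length ≤ f n

/-- The restriction `C/F` of a class `C` to families having an `f`-ceiling for some `f ∈ S`. -/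
def ceil (C : Set Family) (S : Set (ℕ → ℕ)) : Set Family :=
  {F | F ∈ C ∧ ∃ f ∈ S, HasCeiling F f}

def polyFuns : Set (ℕ → ℕ) := {f | ∃ p : Polynomial ℕ, ∀ n, f n = p.eval n}

/-- Super-exponential functions: `f(n) > 2^{p(n)}` for all but finitely many `n`,
for every polynomial `p`. -/
def supexpFuns : Set (ℕ → ℕ) :=
  {f | ∀ p : Polynomial ℕ, ∃ N, ∀ n ≥ N, 2 ^ p.eval n < f n}

/-- `F` has a logarithmic ceiling `ℓ(n) = a·log₂ n + b` with constants `a, b ≥ 0`. -/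
def HasLogCeiling (F : Family) : Prop :=
  ∃ a b : ℝ, 0 ≤ a ∧ 0 ≤ b ∧
    ∀ n, ∀ x ∈ F.prob.valid n, (x.length : ℝ) ≤ a * Real.logb 2 n + b

/-- The restriction `C/log` of a class `C` to families having logarithmic ceilings. -/
def ceilLog (C : Set Family) : Set Family := {F | F ∈ C ∧ HasLogCeiling F}
/-! ## The alphabet `{0, 1, #}` and encodings -/

inductive Sym3 : Type
  | zero | one | hash
deriving DecidableEq

instance : Fintype Sym3 :=
  ⟨{Sym3.zero, Sym3.one, Sym3.hash}, by intro x; cases x <;> simp⟩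

/-- The block `1^i 0^{m-i}`. -/
def block (m i : ℕ) : List Sym3 :=
  List.replicate i Sym3.one ++ List.replicate (m - i) Sym3.zero

lemma block_length {m i : ℕ} (h : i ≤ m) : (block m i).length = m := by
  simp [block]; omega

lemma block_count {m : ℕ} (i : ℕ) : (block m i).count Sym3.one = i := by
  simp [block, List.count_append, List.count_replicate]

lemma block_inj {m i j : ℕ} (h : block m i = block m j) : i = j := by
  have := block_count (m := m) i
  rw [h, block_count] at this
  omega

/-- The encoding `[[i₁,…,i_k]]_m` of a list of numbers. -/
def enc (m : ℕ) : List ℕ → List Sym3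
  | [] => []
  | [i] => block m i
  | i :: j :: rest => block m i ++ Sym3.zero :: enc m (j :: rest)

/-- Lists of length `k` with entries in `[n]`. -/
def ValidList (n k : ℕ) (l : List ℕ) : Prop :=
  l.length = k ∧ ∀ i ∈ l, 1 ≤ i ∧ i ≤ n

lemma enc_length {m : ℕ} :
    ∀ l : List ℕ, (∀ i ∈ l, i ≤ m) → (enc m l).length = l.length * (m + 1) - 1
  | [] => by simp [enc]
  | [i] => by
      intro h
      simp [enc, block_length (h i (by simp))]
  | i :: j :: rest => by
      intro h
      have ih := enc_length (j :: rest) (fun a ha => h a (List.mem_cons_of_mem _ ha))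
      have hb : (block m i).length = m := block_length (h i (List.mem_cons_self))
      show (block m i ++ Sym3.zero :: enc m (j :: rest)).length = _
      rw [List.length_append, hb, List.length_cons, ih]
      have hc : (i :: j :: rest).length = (j :: rest).length + 1 := by simp
      rw [hc]
      set L := (j :: rest).length with hLdef
      have hL : 1 ≤ L := by simp [hLdef]
      have h1 : (L + 1) * (m + 1) = L * (m + 1) + (m + 1) := by ring
      rw [h1]
      set P := L * (m + 1) with hPdef
      have hP : 1 ≤ P := by
        have := Nat.mul_le_mul hL (Nat.le_add_left 1 m)
        simpa [hPdef] using this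
      omega

lemma enc_ne_nil {m : ℕ} (i : ℕ) (rest : List ℕ) (hi : 1 ≤ i) :
    enc m (i :: rest) ≠ [] := by
  cases rest with
  | nil =>
      simp only [enc, block]
      intro h
      have := congrArg List.length h
      simp at this
      omega
  | cons j rest' =>
      simp only [enc]
      intro h
      have := congrArg List.length h
      simp at this

lemma enc_inj {m : ℕ} :
    ∀ u w : List ℕ, (∀ i ∈ u, 1 ≤ i ∧ i ≤ m) → (∀ i ∈ w, 1 ≤ i ∧ i ≤ m) →
      enc m u = enc m w → u = w
  | [], [], _, _, _ => rfl
  | [], j :: w', _, hw, h => by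
      exact absurd h.symm (enc_ne_nil j w' (hw j (by simp)).1)
  | i :: u', [], hu, _, h => by
      exact absurd h (enc_ne_nil i u' (hu i (by simp)).1)
  | [i], [j], hu, hw, h => by
      simp only [enc] at h
      rw [block_inj h]
  | [i], j :: b :: w', hu, hw, h => by
      exfalso
      have hl := congrArg List.length h
      rw [show enc m [i] = block m i from rfl,
        show enc m (j :: b :: w') = block m j ++ Sym3.zero :: enc m (b :: w') from rfl] at hl
      rw [List.length_append, List.length_cons,
        block_length (hu i (by simp)).2, block_length (hw j (by simp)).2] at hl
      omega
  | i :: a :: u', [j], hu, hw, h => by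
      exfalso
      have hl := congrArg List.length h
      rw [show enc m [j] = block m j from rfl,
        show enc m (i :: a :: u') = block m i ++ Sym3.zero :: enc m (a :: u') from rfl] at hl
      rw [List.length_append, List.length_cons,
        block_length (hu i (by simp)).2, block_length (hw j (by simp)).2] at hl
      omega
  | i :: a :: u', j :: b :: w', hu, hw, h => by
      rw [show enc m (i :: a :: u') = block m i ++ Sym3.zero :: enc m (a :: u') from rfl,
        show enc m (j :: b :: w') = block m j ++ Sym3.zero :: enc m (b :: w') from rfl] at h
      have hlen : (block m i).length = (block m j).length := by
        rw [block_length (hu i (by simp)).2, block_length (hw j (by simp)).2]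
      obtain ⟨h1, h2⟩ := List.append_inj h hlen
      have h3 : enc m (a :: u') = enc m (b :: w') := by
        simpa using h2
      have ih := enc_inj (a :: u') (b :: w')
        (fun x hx => hu x (List.mem_cons_of_mem _ hx))
        (fun x hx => hw x (List.mem_cons_of_mem _ hx)) h3
      rw [block_inj h1, ih]
/-! ## The promise problem family `L₁` -/

def L1pos (n : ℕ) : Set (List Sym3) :=
  {x | ∃ u v : List ℕ, ValidList n n u ∧ ValidList n n v ∧ u ≠ v ∧
        x = enc n u ++ Sym3.hash :: enc n v}

def L1neg (n : ℕ) : Set (List Sym3) :=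
  {x | ∃ u v : List ℕ, ValidList n n u ∧ ValidList n n v ∧ u = v ∧
        x = enc n u ++ Sym3.hash :: enc n v}

lemma L1_disj (n : ℕ) : Disjoint (L1pos n) (L1neg n) := by
  rw [Set.disjoint_left]
  rintro x ⟨u, v, hu, hv, huv, rfl⟩ ⟨u', v', hu', hv', huv', heq⟩
  have hlen : (enc n u).length = (enc n u').length := by
    rw [enc_length u (fun i hi => (hu.2 i hi).2),
      enc_length u' (fun i hi => (hu'.2 i hi).2), hu.1, hu'.1]
  obtain ⟨h1, h2⟩ := List.append_inj heq hlen
  have h2' : enc n v = enc n v' := by simpa using h2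
  have e1 : u = u' := enc_inj u u' hu.2 hu'.2 h1
  have e2 : v = v' := enc_inj v v' hv.2 hv'.2 h2'
  exact huv (by rw [e1, e2, huv'])

def L1prob : PromiseFamily Sym3 := ⟨L1pos, L1neg, L1_disj⟩

def L1fam : Family := { alph := Sym3, prob := L1prob }

/-! ## Matrices, their encodings, and the promise problem family `L₂` -/

/-- `R` represents an `n × n` matrix with entries in `[n]`, given as its list of rows. -/
def ValidMat (n : ℕ) (R : List (List ℕ)) : Prop :=
  R.length = n ∧ ∀ r ∈ R, ValidList n n r

/-- The encoding `[[D]]_n` of a matrix: its encoded rows joined by `#`. -/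
def encMat (n : ℕ) : List (List ℕ) → List Sym3
  | [] => []
  | [r] => enc n r
  | r :: s :: rest => enc n r ++ Sym3.hash :: encMat n (s :: rest)

lemma encMat_len {n : ℕ} :
    ∀ R : List (List ℕ), (∀ r ∈ R, ValidList n n r) →
      (encMat n R).length = R.length * (n * (n + 1) - 1 + 1) - 1
  | [] => by simp [encMat]
  | [r] => by
      intro h
      have hr := h r (by simp)
      have he : (enc n r).length = n * (n + 1) - 1 := by
        rw [enc_length r (fun i hi => (hr.2 i hi).2), hr.1]
      show (enc n r).length = ([r] : List (List ℕ)).length * (n * (n + 1) - 1 + 1) - 1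
      rw [he, show ([r] : List (List ℕ)).length = 1 from rfl]
      omega
  | r :: s :: rest => by
      intro h
      have ih := encMat_len (s :: rest) (fun a ha => h a (List.mem_cons_of_mem _ ha))
      have hr := h r (by simp)
      have he : (enc n r).length = n * (n + 1) - 1 := by
        rw [enc_length r (fun i hi => (hr.2 i hi).2), hr.1]
      show (enc n r ++ Sym3.hash :: encMat n (s :: rest)).length = _
      rw [List.length_append, he, List.length_cons, ih]
      have hc : (r :: s :: rest).length = (s :: rest).length + 1 := by simp
      rw [hc]
      set e := n * (n + 1) - 1 with hedef
      set L := (s :: rest).length with hLdef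
      have hL : 1 ≤ L := by simp [hLdef]
      have h1 : (L + 1) * (e + 1) = L * (e + 1) + (e + 1) := by ring
      rw [h1]
      set P := L * (e + 1) with hPdef
      have hP : 1 ≤ P := by
        calc 1 = 1 * 1 := by ring
        _ ≤ L * (e + 1) := Nat.mul_le_mul hL (by omega)
      omega

lemma encMat_inj {n : ℕ} :
    ∀ R W : List (List ℕ), (∀ r ∈ R, ValidList n n r) → (∀ r ∈ W, ValidList n n r) →
      R.length = W.length → encMat n R = encMat n W → R = W
  | [], [], _, _, _, _ => rfl
  | [], _ :: _, _, _, hl, _ => by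
      simp only [List.length_cons, List.length_nil] at hl
      omega
  | _ :: _, [], _, _, hl, _ => by
      simp only [List.length_cons, List.length_nil] at hl
      omega
  | [r], [w], hR, hW, _, h => by
      have := enc_inj r w (hR r (by simp)).2 (hW w (by simp)).2 h
      rw [this]
  | [r], w :: w' :: W', _, _, hl, _ => by
      simp only [List.length_cons, List.length_nil] at hl
      omega
  | r :: r' :: R', [w], _, _, hl, _ => by
      simp only [List.length_cons, List.length_nil] at hl
      omega
  | r :: r' :: R', w :: w' :: W', hR, hW, hl, h => by
      rw [show encMat n (r :: r' :: R') = enc n r ++ Sym3.hash :: encMat n (r' :: R') from rfl,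
        show encMat n (w :: w' :: W') = enc n w ++ Sym3.hash :: encMat n (w' :: W') from rfl] at h
      have hrlen : (enc n r).length = (enc n w).length := by
        have h1 := hR r (by simp); have h2 := hW w (by simp)
        rw [enc_length r (fun i hi => (h1.2 i hi).2),
          enc_length w (fun i hi => (h2.2 i hi).2), h1.1, h2.1]
      obtain ⟨h1, h2⟩ := List.append_inj h hrlen
      have h3 : encMat n (r' :: R') = encMat n (w' :: W') := by simpa using h2
      have ihr := enc_inj r w (hR r (by simp)).2 (hW w (by simp)).2 h1
      have ih := encMat_inj (r' :: R') (w' :: W')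
        (fun a ha => hR a (List.mem_cons_of_mem _ ha))
        (fun a ha => hW a (List.mem_cons_of_mem _ ha))
        (by simpa using hl) h3
      rw [ihr, ih]

/-- `SelSum R s` holds iff `s` is obtained by choosing one entry from each row of `R`
(the value `sum_D(σ)` for some choice function `σ`). -/
inductive SelSum : List (List ℕ) → ℕ → Prop
  | nil : SelSum [] 0
  | cons {a : ℕ} {r : List ℕ} {rest : List (List ℕ)} {s : ℕ} :
      a ∈ r → SelSum rest s → SelSum (r :: rest) (a + s)

def L2pos (n : ℕ) : Set (List Sym3) :=
  {x | ∃ R R' : List (List ℕ), ValidMat n R ∧ ValidMat n R' ∧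
        (∃ s : ℕ, SelSum R s ∧ SelSum R' s) ∧
        x = encMat n R ++ Sym3.hash :: Sym3.hash :: encMat n R'}

def L2neg (n : ℕ) : Set (List Sym3) :=
  {x | ∃ R R' : List (List ℕ), ValidMat n R ∧ ValidMat n R' ∧
        (∀ s s' : ℕ, SelSum R s → SelSum R' s' → s ≠ s') ∧
        x = encMat n R ++ Sym3.hash :: Sym3.hash :: encMat n R'}

lemma L2_disj (n : ℕ) : Disjoint (L2pos n) (L2neg n) := by
  rw [Set.disjoint_left]
  rintro x ⟨R, R', hR, hR', ⟨s, hs, hs'⟩, rfl⟩ ⟨W, W', hW, hW', hne, heq⟩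
  have hlen : (encMat n R).length = (encMat n W).length := by
    rw [encMat_len R hR.2, encMat_len W hW.2, hR.1, hW.1]
  obtain ⟨h1, h2⟩ := List.append_inj heq hlen
  have h2' : encMat n R' = encMat n W' := by simpa using h2
  have e1 : R = W := encMat_inj R W hR.2 hW.2 (by rw [hR.1, hW.1]) h1
  have e2 : R' = W' := encMat_inj R' W' hR'.2 hW'.2 (by rw [hR'.1, hW'.1]) h2'
  exact hne s s (e1 ▸ hs) (e2 ▸ hs') rfl

def L2prob : PromiseFamily Sym3 := ⟨L2pos, L2neg, L2_disj⟩

def L2fam : Family := { alph := Sym3, prob := L2prob }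
/-! ## One-way probabilistic finite automata data -/

/-- Product of the matrices of the symbols of a word. -/
noncomputable def wordMatrix {α Q : Type} [Fintype Q] [DecidableEq Q]
    (Mσ : TapeSym α → Matrix Q Q ℝ) (w : List (TapeSym α)) : Matrix Q Q ℝ :=
  (w.map Mσ).prod

/-- The tape word `▷ x ◁`. -/
def tapeWord {α : Type} (x : List α) : List (TapeSym α) :=
  Sum.inr false :: (x.map Sum.inl ++ [Sum.inr true])

/-- `p_{acc}(x : q)`: the `q`-entry of the row vector `ν · M_{▷x◁}`. -/
noncomputable def pacc {α Q : Type} [Fintype Q] [DecidableEq Q]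
    (ν : Q → ℝ) (Mσ : TapeSym α → Matrix Q Q ℝ) (x : List α) (q : Q) : ℝ :=
  Matrix.vecMul ν (wordMatrix Mσ (tapeWord x)) q
namespace Sep8

/-! ### The witness family -/

def myPos (n : ℕ) : Set (List Bool) :=
  {x | ∃ u v : Fin n → Bool, u ≠ v ∧ x = List.ofFn u ++ List.ofFn v}

def myNeg (n : ℕ) : Set (List Bool) :=
  {x | ∃ u : Fin n → Bool, x = List.ofFn u ++ List.ofFn u}

lemma my_disj (n : ℕ) : Disjoint (myPos n) (myNeg n) := by
  rw [Set.disjoint_left]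
  rintro x ⟨u, v, huv, rfl⟩ ⟨w, heq⟩
  apply huv
  have hlen : (List.ofFn u).length = (List.ofFn w).length := by simp
  obtain ⟨h1, h2⟩ := List.append_inj heq hlen
  have e1 : u = w := List.ofFn_injective h1
  have e2 : v = w := List.ofFn_injective h2
  rw [e1, e2]

def myProb : PromiseFamily Bool := ⟨myPos, myNeg, my_disj⟩

def myFam : Family := { alph := Bool, prob := myProb }

lemma valid_length {n : ℕ} {x : List Bool} (hx : x ∈ myProb.valid n) :
    x.length = 2 * n := by
  rcases hx with ⟨u, v, _, rfl⟩ | ⟨u, rfl⟩ <;> simp <;> ring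

/-! ### The reach-unambiguous machine -/

abbrev StT (n : ℕ) := Fin (2*n+1) × Option (Fin n × Bool × Bool)

def tnext (n : ℕ) (t : Fin (2*n+1)) : Fin (2*n+1) := ⟨min (t.val+1) (2*n), by omega⟩

def step (n : ℕ) (q : StT n) (a : Bool) : Set (StT n) :=
  match q with
  | (t, none) =>
      insert (tnext n t, none)
        {z | ∃ j : Fin n, (j:ℕ) = (t:ℕ) ∧ z = (tnext n t, some (j, a, false))}
  | (t, some (j, b, r)) =>
      {(tnext n t, some (j, b, if (t:ℕ) = n + (j:ℕ) then decide (a ≠ b) else r))}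

def myM (n : ℕ) : OneNFA Bool where
  Q := StT n
  start := (⟨0, by omega⟩, none)
  next := step n
  next_nonempty := by
    rintro ⟨t, s⟩ a
    cases s with
    | none => exact ⟨_, Set.mem_insert _ _⟩
    | some s => obtain ⟨j, b, r⟩ := s; exact ⟨_, rfl⟩
  acc := {q | (q.1 : ℕ) = 2*n ∧ ∃ j b, q.2 = some (j, b, true)}

lemma mem_step_fst {n : ℕ} {q z : StT n} {a : Bool} (hz : z ∈ step n q a) :
    z.1 = tnext n q.1 := by
  obtain ⟨t, s⟩ := q
  cases s with
  | none =>
      rcases hz with h | ⟨j, hj, rfl⟩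
      · rw [h]
      · rfl
  | some s =>
      obtain ⟨j, b, r⟩ := s
      rw [hz]

lemma layer {n : ℕ} {y : List Bool} (hy : y.length ≤ 2*n)
    {p : Fin (y.length+1) → StT n} (hp : (myM n).IsPath y p) (k : Fin (y.length+1)) :
    ((p k).1 : ℕ) = (k : ℕ) := by
  induction k using Fin.induction with
  | zero => rw [hp.1]; rfl
  | succ i ih =>
      have h := mem_step_fst (hp.2 i)
      have hl : ((p i.castSucc).1 : ℕ) = (i : ℕ) := ih
      have : ((p i.succ).1 : ℕ) = min (((p i.castSucc).1 : ℕ) + 1) (2*n) := by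
        rw [h]; rfl
      rw [this, hl]
      have := i.isLt
      simp only [Fin.val_succ]
      omega

end Sep8
namespace Sep8

/-- Forward invariant carried by any state reachable at position `k`. -/
def Good (n : ℕ) (y : List Bool) (k : ℕ) (s : Option (Fin n × Bool × Bool)) : Prop :=
  ∀ j b r, s = some (j, b, r) →
    (j:ℕ) + 1 ≤ k ∧ b = y.getD (j:ℕ) false ∧
      (r = true → n + (j:ℕ) + 1 ≤ k ∧ y.getD (n + (j:ℕ)) false ≠ b)

lemma good_of_path {n : ℕ} {y : List Bool} (hy : y.length ≤ 2*n)
    {p : Fin (y.length+1) → StT n} (hp : (myM n).IsPath y p) (k : Fin (y.length+1)) :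
    Good n y (k : ℕ) (p k).2 := by
  induction k using Fin.induction with
  | zero =>
      rw [hp.1]
      intro j b r h
      exact absurd h (by simp [myM])
  | succ i ih =>
      have hstep := hp.2 i
      have hl : ((p i.castSucc).1 : ℕ) = (i : ℕ) := layer hy hp i.castSucc
      have hil := i.isLt
      rcases hq : p i.castSucc with ⟨t, s⟩
      rw [hq] at hstep hl
      have hlt : (t : ℕ) = (i : ℕ) := hl
      have hgety : y.get i = y.getD (i : ℕ) false := by
        rw [List.get_eq_getElem, List.getD_eq_getElem y false hil]
      cases s with
      | none =>
          rcases hstep with h | ⟨j, hj, h⟩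
          · intro j' b' r' hh
            rw [h] at hh
            exact absurd hh (by simp)
          · intro j' b' r' hh
            rw [h] at hh
            simp only [Option.some.injEq, Prod.mk.injEq] at hh
            obtain ⟨hj', hb', hr'⟩ := hh
            subst hj'; subst hb'
            refine ⟨by simp only [Fin.val_succ]; omega, by rw [hj, hlt, ← hgety], ?_⟩
            intro hr; rw [← hr'] at hr; exact absurd hr (by simp)
      | some s =>
          obtain ⟨j, b, r⟩ := s
          have ihg := ih
          rw [hq] at ihg
          obtain ⟨hj1, hb, hrcl⟩ := ihg j b r rfl
          rw [Fin.coe_castSucc] at hj1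
          intro j' b' r' hh
          rw [hstep] at hh
          simp only [Option.some.injEq, Prod.mk.injEq] at hh
          obtain ⟨hj', hb', hr'⟩ := hh
          subst hj'; subst hb'
          refine ⟨by simp [Fin.val_succ]; omega, hb, ?_⟩
          intro hr
          subst hr'
          by_cases hc : (t : ℕ) = n + (j : ℕ)
          · rw [if_pos hc] at hr
            have hd := of_decide_eq_true hr
            constructor
            · simp [Fin.val_succ]; omega
            · rw [← hlt, hc] at hgety
              rw [hgety] at hd
              exact hd
          · rw [if_neg hc] at hr
            obtain ⟨h1, h2⟩ := hrcl hr
            rw [Fin.coe_castSucc] at h1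
            exact ⟨by simp [Fin.val_succ]; omega, h2⟩

/-- The backward (predecessor) function: the machine is backward deterministic
along reachable configurations. -/
def predS (n : ℕ) (q : StT n) : StT n :=
  ⟨⟨(q.1:ℕ) - 1, by omega⟩,
   match q.2 with
   | none => none
   | some (j, b, r) =>
       if (q.1:ℕ) = (j:ℕ) + 1 then none
       else some (j, b, if (q.1:ℕ) = n + (j:ℕ) + 1 then false else r)⟩

lemma pred_of_mem {n : ℕ} {q z : StT n} {a : Bool} (hz : z ∈ step n q a)
    (hq : (q.1:ℕ) + 1 ≤ 2*n)
    (hg : ∀ j b r, q.2 = some (j, b, r) →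
      (j:ℕ) + 1 ≤ (q.1:ℕ) ∧ (r = true → n + (j:ℕ) + 1 ≤ (q.1:ℕ))) :
    q = predS n z := by
  obtain ⟨t, s⟩ := q
  have hq' : (t : ℕ) + 1 ≤ 2*n := hq
  have htn : ((tnext n t : Fin (2*n+1)) : ℕ) = (t : ℕ) + 1 := by
    simp only [tnext]
    omega
  cases s with
  | none =>
      rcases hz with h | ⟨j, hj, h⟩
      · subst h
        simp only [predS, htn]
        exact Prod.ext (Fin.ext (by simp)) rfl
      · subst h
        simp only [predS, htn]
        refine Prod.ext (Fin.ext (by simp)) ?_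
        simp only
        rw [if_pos (by omega)]
  | some s =>
      obtain ⟨j, b, r⟩ := s
      obtain ⟨hj1, hr1⟩ := hg j b r rfl
      have hj1' : (j:ℕ) + 1 ≤ (t:ℕ) := hj1
      have hr1' : r = true → n + (j:ℕ) + 1 ≤ (t:ℕ) := hr1
      subst hz
      simp only [predS, htn]
      refine Prod.ext (Fin.ext (by simp)) ?_
      simp only
      rw [if_neg (by omega)]
      by_cases hc : (t : ℕ) = n + (j : ℕ)
      · rw [if_pos (by omega)]
        have : r = false := by
          cases r
          · rfl
          · exact absurd (hr1' rfl) (by omega)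
        rw [this]
      · rw [if_neg (by omega), if_neg hc]

/-- Reach-unambiguity: two computation паths on the same word with the same
endpoint coincide. -/
lemma path_unique {n : ℕ} {y : List Bool} (hy : y.length ≤ 2*n)
    {p p' : Fin (y.length+1) → StT n}
    (hp : (myM n).IsPath y p) (hp' : (myM n).IsPath y p')
    (he : p (Fin.last y.length) = p' (Fin.last y.length)) : p = p' := by
  have key : ∀ d : ℕ, ∀ k : Fin (y.length+1), (k : ℕ) + d = y.length → p k = p' k := by
    intro d
    induction d with
    | zero =>
        intro k hk
        have : k = Fin.last y.length := Fin.ext (by simpa using hk)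
        rw [this, he]
    | succ d ih =>
        intro k hk
        have hkl : (k : ℕ) < y.length := by omega
        set i : Fin y.length := ⟨(k : ℕ), hkl⟩ with hi
        have hks : k = i.castSucc := Fin.ext rfl
        have hnext : p i.succ = p' i.succ := ih i.succ (by simp [Fin.val_succ, hi]; omega)
        have hpred : p i.castSucc = predS n (p i.succ) := by
          apply pred_of_mem (hp.2 i)
          · rw [layer hy hp i.castSucc]; simp [hi]; omega
          · intro j b r hh
            have hg := good_of_path hy hp i.castSucc
            obtain ⟨h1, _, h3⟩ := hg j b r hh
            rw [layer hy hp i.castSucc]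
            exact ⟨h1, fun hr => (h3 hr).1⟩
        have hpred' : p' i.castSucc = predS n (p' i.succ) := by
          apply pred_of_mem (hp'.2 i)
          · rw [layer hy hp' i.castSucc]; simp [hi]; omega
          · intro j b r hh
            have hg := good_of_path hy hp' i.castSucc
            obtain ⟨h1, _, h3⟩ := hg j b r hh
            rw [layer hy hp' i.castSucc]
            exact ⟨h1, fun hr => (h3 hr).1⟩
        rw [hks, hpred, hpred', hnext]
  funext k
  exact key (y.length - (k : ℕ)) k (by have := k.isLt; omega)

end Sep8
namespace Sep8

lemma myM_reachU : ReachUnambiguous1 myM myProb := by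
  intro n x hx i hi q p1 hp1 p2 hp2
  have hy : (x.take i).length ≤ 2*n := by
    rw [List.length_take, valid_length hx]; omega
  exact path_unique hy hp1.1 hp2.1 (hp1.2.trans hp2.2.symm)

lemma myM_card (n : ℕ) : Fintype.card (StT n) = (2*n+1) * (4*n+1) := by
  simp [Fintype.card_option]
  ring

lemma myM_polysize : PolySize1 myM := by
  refine ⟨(2 * Polynomial.X + 1) * (4 * Polynomial.X + 1), fun n => ?_⟩
  have : (myM n).sc = (2*n+1) * (4*n+1) := myM_card n
  rw [this]
  simp [Polynomial.eval_mul, Polynomial.eval_add]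

lemma myM_acceptfew : AcceptFew1 myM myProb := by
  refine ⟨(2 * MvPolynomial.X 0 + 1) * (4 * MvPolynomial.X 0 + 1), fun n x hx => ?_⟩
  have heval : MvPolynomial.eval ![n, x.length]
      ((2 * MvPolynomial.X 0 + 1) * (4 * MvPolynomial.X 0 + 1) : MvPolynomial (Fin 2) ℕ)
      = (2*n+1) * (4*n+1) := by
    simp [Matrix.cons_val_zero]
  rw [heval]
  have hxl : x.length ≤ 2*n := by rw [valid_length hx]
  have hinj : Set.InjOn (fun p => p (Fin.last x.length))
      {p : Fin (x.length+1) → (myM n).Q | (myM n).IsAccPath x p} := by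
    intro p1 hp1 p2 hp2 hfe
    exact path_unique hxl hp1.1 hp2.1 hfe
  calc {p | (myM n).IsAccPath x p}.ncard
      ≤ (Set.univ : Set (StT n)).ncard := by
        exact Set.ncard_le_ncard_of_injOn _ (fun a _ => Set.mem_univ _) hinj
          Set.finite_univ
    _ = (2*n+1) * (4*n+1) := by rw [Set.ncard_univ, Nat.card_eq_fintype_card, myM_card]

lemma get_append_ofFn {n : ℕ} {u v : Fin n → Bool} (i : Fin (List.ofFn u ++ List.ofFn v).length) :
    (List.ofFn u ++ List.ofFn v).get i =
      if h : (i : ℕ) < n then u ⟨i, h⟩ else v ⟨(i : ℕ) - n, by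
        have := i.isLt; simp at this; omega⟩ := by
  have hil := i.isLt
  simp only [List.length_append, List.length_ofFn] at hil
  rw [List.get_eq_getElem]
  by_cases h : (i : ℕ) < n
  · rw [dif_pos h, List.getElem_append_left (by simpa using h)]
    simp
  · rw [dif_neg h, List.getElem_append_right (by simpa using h)]
    simp

lemma step_none_mem1 {n : ℕ} (t : Fin (2*n+1)) (a : Bool) :
    (tnext n t, none) ∈ step n (t, none) a := Set.mem_insert _ _

lemma step_none_mem2 {n : ℕ} (t : Fin (2*n+1)) (a : Bool) (j : Fin n) (h : (j:ℕ) = (t:ℕ)) :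
    (tnext n t, some (j, a, false)) ∈ step n (t, none) a := Or.inr ⟨j, h, rfl⟩

lemma step_some_mem {n : ℕ} (t : Fin (2*n+1)) (a : Bool) (j : Fin n) (b r : Bool) :
    (tnext n t, some (j, b, if (t:ℕ) = n + (j:ℕ) then decide (a ≠ b) else r))
      ∈ step n (t, some (j, b, r)) a := rfl

lemma myM_solves : Solves1 myM myProb := by
  intro n
  constructor
  · rintro x ⟨u, v, huv, rfl⟩
    obtain ⟨j, hj⟩ := Function.ne_iff.mp huv
    have hx2 : (List.ofFn u ++ List.ofFn v).length = 2*n := by simp; ring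
    have hjn := j.isLt
    have hlt : ∀ k : Fin ((List.ofFn u ++ List.ofFn v).length+1), (k : ℕ) < 2*n+1 := by
      intro k; have := k.isLt; omega
    refine ⟨fun k => (⟨(k : ℕ), hlt k⟩,
      if (k : ℕ) ≤ (j : ℕ) then none
      else some (j, u j, decide (n + (j : ℕ) + 1 ≤ (k : ℕ)))), ⟨?_, ?_⟩, ?_⟩
    · simp only [Fin.val_zero]
      simp only [Nat.zero_le, if_true]
      rfl
    · intro i
      have hil := i.isLt
      have htn : tnext n ⟨(i : ℕ), hlt i.castSucc⟩ = ⟨(i : ℕ) + 1, by omega⟩ := by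
        simp only [tnext]
        exact Fin.ext (by simp; omega)
      dsimp only
      simp only [Fin.val_succ, Fin.coe_castSucc]
      rcases lt_trichotomy (i : ℕ) (j : ℕ) with hc | hc | hc
      · rw [if_pos (by omega), if_pos (by omega)]
        have h := step_none_mem1 (n := n) ⟨(i : ℕ), hlt i.castSucc⟩
          ((List.ofFn u ++ List.ofFn v).get i)
        rw [htn] at h
        exact h
      · rw [if_pos (by omega), if_neg (by omega)]
        have ha : (List.ofFn u ++ List.ofFn v).get i = u j := by
          rw [get_append_ofFn, dif_pos (by omega)]
          congr 1
          exact Fin.ext hc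
        have hd : decide (n + (j : ℕ) + 1 ≤ (i : ℕ) + 1) = false := by
          rw [decide_eq_false_iff_not]; omega
        rw [hd]
        have h := step_none_mem2 (n := n) ⟨(i : ℕ), hlt i.castSucc⟩
          ((List.ofFn u ++ List.ofFn v).get i) j hc.symm
        rw [htn, ha] at h
        rw [ha]
        exact h
      · rw [if_neg (by omega), if_neg (by omega)]
        have h := step_some_mem (n := n) ⟨(i : ℕ), hlt i.castSucc⟩
          ((List.ofFn u ++ List.ofFn v).get i) j (u j) (decide (n + (j : ℕ) + 1 ≤ (i : ℕ)))
        rw [htn] at h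
        by_cases hc2 : (i : ℕ) = n + (j : ℕ)
        · have ha : (List.ofFn u ++ List.ofFn v).get i = v j := by
            rw [get_append_ofFn, dif_neg (by omega)]
            congr 1
            exact Fin.ext (show (i:ℕ) - n = (j:ℕ) by omega)
          rw [if_pos hc2, ha] at h
          have h1 : decide (v j ≠ u j) = true := by
            rw [decide_eq_true_iff]
            exact fun hh => hj hh.symm
          have h2 : decide (n + (j : ℕ) + 1 ≤ (i : ℕ) + 1) = true := by
            rw [decide_eq_true_iff]; omega
          rw [h1] at h
          rw [h2, ha]
          exact h
        · rw [if_neg hc2] at h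
          have hd : decide (n + (j : ℕ) + 1 ≤ (i : ℕ) + 1)
              = decide (n + (j : ℕ) + 1 ≤ (i : ℕ)) := decide_eq_decide.mpr (by omega)
          rw [hd]
          exact h
    · show _ ∈ (myM n).acc
      dsimp only
      have hlast : ((Fin.last (List.ofFn u ++ List.ofFn v).length) : ℕ) = 2*n := by
        simp [Fin.val_last]; ring
      simp only [hlast]
      rw [if_neg (by omega)]
      refine ⟨rfl, j, u j, ?_⟩
      have hd : decide (n + (j : ℕ) + 1 ≤ 2*n) = true := by
        rw [decide_eq_true_iff]; omega
      rw [hd]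
  · rintro x ⟨u, rfl⟩ ⟨p, hpath, hacc⟩
    have hx2 : (List.ofFn u ++ List.ofFn u).length = 2*n := by simp; ring
    obtain ⟨hl2n, j, b, hsome⟩ := hacc
    have hg := good_of_path (by omega) hpath (Fin.last (List.ofFn u ++ List.ofFn u).length)
    obtain ⟨h1, h2, h3⟩ := hg j b true hsome
    obtain ⟨h4, h5⟩ := h3 rfl
    have hlast : ((Fin.last (List.ofFn u ++ List.ofFn u).length) : ℕ) = 2*n := by
      simp [Fin.val_last]; ring
    rw [hlast] at h1 h4
    have hjn := j.isLt
    have hgd1 : (List.ofFn u ++ List.ofFn u).getD (j : ℕ) false = u j := by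
      rw [List.getD_eq_getElem _ false (by omega : (j:ℕ) < (List.ofFn u ++ List.ofFn u).length)]
      rw [List.getElem_append_left (by simpa using hjn)]
      simp
    have hgd2 : (List.ofFn u ++ List.ofFn u).getD (n + (j : ℕ)) false = u j := by
      rw [List.getD_eq_getElem _ false
        (by omega : n + (j:ℕ) < (List.ofFn u ++ List.ofFn u).length)]
      rw [List.getElem_append_right (by simp)]
      simp only [List.length_ofFn, List.getElem_ofFn]
      congr 1
      exact Fin.ext (show n + (j:ℕ) - n = (j:ℕ) by omega)
    rw [hgd1] at h2
    rw [hgd2, h2] at h5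
    exact h5 rfl

lemma myFam_mem_oneReachU : myFam ∈ oneReachU :=
  ⟨myM, myM_polysize, myM_acceptfew, myM_reachU, myM_solves⟩

end Sep8
namespace Sep8

open scoped Classical

/-! ### Counting computation paths of an arbitrary 1nfa -/

variable {α : Type}

noncomputable def nPaths (M : OneNFA α) : M.Q → List α → M.Q → ℕ
  | q, [], q' => if q = q' then 1 else 0
  | q, a :: w, q' => ∑ r : M.Q, if r ∈ M.next q a then nPaths M r w q' else 0

lemma nPaths_append (M : OneNFA α) (q'' : M.Q) (y x : List α) (q : M.Q) :
    nPaths M q (x ++ y) q'' = ∑ q' : M.Q, nPaths M q x q' * nPaths M q' y q'' := by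
  induction x generalizing q with
  | nil =>
      simp only [List.nil_append, nPaths]
      rw [Finset.sum_eq_single q]
      · simp
      · intro r _ hr
        rw [if_neg (Ne.symm hr), zero_mul]
      · intro h
        exact absurd (Finset.mem_univ q) h
  | cons a w ih =>
      show (∑ r : M.Q, if r ∈ M.next q a then nPaths M r (w ++ y) q'' else 0) = _
      have hrhs : ∀ q' : M.Q, nPaths M q (a :: w) q' =
          ∑ r : M.Q, if r ∈ M.next q a then nPaths M r w q' else 0 := fun _ => rfl
      have push : ∀ r : M.Q,
          (if r ∈ M.next q a then ∑ q' : M.Q, nPaths M r w q' * nPaths M q' y q'' else 0)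
          = ∑ q' : M.Q, if r ∈ M.next q a then nPaths M r w q' * nPaths M q' y q'' else 0 := by
        intro r
        split_ifs with h
        · rfl
        · simp
      simp only [ih, push, hrhs]
      rw [Finset.sum_comm]
      apply Finset.sum_congr rfl
      intro q' _
      rw [Finset.sum_mul]
      apply Finset.sum_congr rfl
      intro r _
      rw [ite_mul, zero_mul]

/-- The set of paths from `q` to `q'` reading `x`, as a subtype. -/
def PathsTo (M : OneNFA α) (q : M.Q) (x : List α) (q' : M.Q) : Type :=
  {p : Fin (x.length+1) → M.Q //
    (p 0 = q ∧ ∀ i : Fin x.length, p i.succ ∈ M.next (p i.castSucc) (x.get i)) ∧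
      p (Fin.last x.length) = q'}

instance (M : OneNFA α) (q : M.Q) (x : List α) (q' : M.Q) : Finite (PathsTo M q x q') := by
  unfold PathsTo
  infer_instance

lemma nat_card_sigma {ι : Type} [Fintype ι] (f : ι → Type) [∀ i, Finite (f i)] :
    Nat.card (Σ i, f i) = ∑ i, Nat.card (f i) := by
  letI := fun i => Fintype.ofFinite (f i)
  simp [Nat.card_eq_fintype_card, Fintype.card_sigma]

lemma card_plift_prod {P : Prop} (T : Type) [Finite T] :
    Nat.card (PLift P × T) = if P then Nat.card T else 0 := by
  rw [Nat.card_prod]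
  split_ifs with h
  · have : Nat.card (PLift P) = 1 := by
      rw [Nat.card_eq_one_iff_unique]
      exact ⟨⟨by rintro ⟨a⟩ ⟨b⟩; rfl⟩, ⟨⟨h⟩⟩⟩
    rw [this, one_mul]
  · have : IsEmpty (PLift P) := ⟨fun hh => h hh.down⟩
    rw [Nat.card_of_isEmpty, zero_mul]

lemma card_pathsTo (M : OneNFA α) (q' : M.Q) (x : List α) (q : M.Q) :
    Nat.card (PathsTo M q x q') = nPaths M q x q' := by
  induction x generalizing q with
  | nil =>
      by_cases h : q = q'
      · subst h
        have h1 : Nat.card (PathsTo M q [] q) = 1 := by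
          rw [Nat.card_eq_one_iff_unique]
          refine ⟨⟨?_⟩, ⟨⟨fun _ => q, ⟨rfl, fun i => Fin.elim0 i⟩, rfl⟩⟩⟩
          rintro ⟨p1, ⟨e1, _⟩, _⟩ ⟨p2, ⟨e2, _⟩, _⟩
          apply Subtype.ext
          funext k
          obtain ⟨k, hk⟩ := k
          have hk0 : k = 0 := by simp at hk; omega
          subst hk0
          show p1 ⟨0, hk⟩ = p2 ⟨0, hk⟩
          have f1 : p1 ⟨0, hk⟩ = q := e1
          have f2 : p2 ⟨0, hk⟩ = q := e2
          rw [f1, f2]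
        rw [h1]
        simp [nPaths]
      · have he : IsEmpty (PathsTo M q [] q') := by
          constructor
          rintro ⟨p, ⟨e1, _⟩, e2⟩
          have f2 : p 0 = q' := e2
          exact h (e1.symm.trans f2)
        rw [Nat.card_of_isEmpty]
        simp [nPaths, h]
  | cons a w ih =>
      have hlc : (a :: w).length = w.length + 1 := rfl
      have hE : PathsTo M q (a :: w) q' ≃
          Σ r : M.Q, PLift (r ∈ M.next q a) × PathsTo M r w q' :=
        { toFun := fun p =>
            ⟨p.1 ⟨1, by omega⟩,
             ⟨by
                have h0 : p.1 ⟨1, by omega⟩ ∈ M.next (p.1 0) a := p.2.1.2 ⟨0, by omega⟩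
                rw [p.2.1.1] at h0
                exact h0⟩,
             ⟨fun i => p.1 ⟨(i : ℕ) + 1, by have := i.isLt; omega⟩,
              ⟨rfl, by
                intro i
                obtain ⟨k, hk⟩ := i
                exact p.2.1.2 ⟨k + 1, by omega⟩⟩,
              p.2.2⟩⟩,
          invFun := fun z =>
            ⟨(Fin.cons q z.2.2.1 : Fin (w.length + 2) → M.Q),
             ⟨rfl, by
                intro i
                obtain ⟨k, hk⟩ := i
                cases k with
                | zero =>
                    show z.2.2.1 ⟨0, by omega⟩ ∈ M.next q a
                    have h0 : z.2.2.1 ⟨0, by omega⟩ = z.1 := z.2.2.2.1.1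
                    rw [h0]
                    exact z.2.1.down
                | succ m => exact z.2.2.2.1.2 ⟨m, by omega⟩⟩,
             z.2.2.2.2⟩,
          left_inv := by
            rintro ⟨p, ⟨h0, hs⟩, hl⟩
            apply Subtype.ext
            funext k
            obtain ⟨k, hk⟩ := k
            cases k with
            | zero => exact h0.symm
            | succ m => rfl,
          right_inv := by
            rintro ⟨r, hm, ⟨p', ⟨h0, hs⟩, hl⟩⟩
            subst h0
            rfl }
      rw [Nat.card_congr hE, nat_card_sigma]
      show _ = ∑ r : M.Q, if r ∈ M.next q a then nPaths M r w q' else 0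
      apply Finset.sum_congr rfl
      intro r _
      rw [card_plift_prod, ih r]

/-- Total number of accepting paths. -/
noncomputable def nAcc (M : OneNFA α) (x : List α) : ℕ :=
  ∑ q' : M.Q, if q' ∈ M.acc then nPaths M M.start x q' else 0

lemma card_accPaths (M : OneNFA α) (x : List α) :
    Nat.card {p : Fin (x.length+1) → M.Q // M.IsAccPath x p} = nAcc M x := by
  have hE : {p : Fin (x.length+1) → M.Q // M.IsAccPath x p} ≃
      Σ q' : M.Q, PLift (q' ∈ M.acc) × PathsTo M M.start x q' :=
    { toFun := fun p => ⟨p.1 (Fin.last x.length), ⟨p.2.2⟩,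
        ⟨p.1, ⟨p.2.1.1, p.2.1.2⟩, rfl⟩⟩,
      invFun := fun z => ⟨z.2.2.1, ⟨⟨z.2.2.2.1.1, z.2.2.2.1.2⟩, by
        rw [z.2.2.2.2]
        exact z.2.1.down⟩⟩,
      left_inv := by
        rintro ⟨p, hp⟩
        rfl,
      right_inv := by
        rintro ⟨q', hm, ⟨p', hp', hl⟩⟩
        subst hl
        rfl }
  rw [Nat.card_congr hE, nat_card_sigma]
  apply Finset.sum_congr rfl
  intro q' _
  rw [card_plift_prod, card_pathsTo]

end Sep8
namespace Sep8

open scoped Classical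

lemma exists_poly_lt_two_pow (P : Polynomial ℕ) : ∃ n : ℕ, 1 ≤ n ∧ P.eval n < 2 ^ n := by
  set d := P.natDegree with hd
  set C := ∑ i ∈ Finset.range (d+1), P.coeff i with hC
  have heval : ∀ n : ℕ, 1 ≤ n → P.eval n ≤ C * n ^ d := by
    intro n hn
    rw [Polynomial.eval_eq_sum_range]
    calc ∑ i ∈ Finset.range (d+1), P.coeff i * n ^ i
        ≤ ∑ i ∈ Finset.range (d+1), P.coeff i * n ^ d := by
          apply Finset.sum_le_sum
          intro i hi
          exact Nat.mul_le_mul_left _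
            (Nat.pow_le_pow_right hn (Nat.lt_succ_iff.mp (Finset.mem_range.mp hi)))
      _ = C * n ^ d := by rw [← Finset.sum_mul]
  have hlim := tendsto_pow_const_div_const_pow_of_one_lt d (show (1:ℝ) < 2 by norm_num)
  have hev : ∀ᶠ n : ℕ in Filter.atTop, (n:ℝ)^d / 2^n < 1/(C+1) :=
    hlim.eventually_lt_const (by positivity)
  obtain ⟨n, hn2, hn1⟩ := (hev.and (Filter.eventually_ge_atTop 1)).exists
  refine ⟨n, hn1, ?_⟩
  have h2pos : (0:ℝ) < 2^n := by positivity
  have hCpos : (0:ℝ) < (C:ℝ)+1 := by positivity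
  rw [div_lt_div_iff₀ h2pos hCpos] at hn2
  have hreal : ((C:ℝ)) * (n:ℝ)^d < 2^n := by nlinarith [pow_nonneg (by positivity : (0:ℝ) ≤ (n:ℝ)) d]
  have hnat : C * n ^ d < 2 ^ n := by exact_mod_cast hreal
  exact lt_of_le_of_lt (heval n hn1) hnat

end Sep8

/-- `1ReachU ⊄ 1U`. -/
theorem oneReachU_not_subset_oneU :
    ∃ F : Family, F ∈ oneReachU ∧ F ∉ oneU := by
  classical
  refine ⟨Sep8.myFam, Sep8.myFam_mem_oneReachU, ?_⟩
  rintro ⟨M, ⟨P, hP⟩, hUn, hSolve⟩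
  obtain ⟨n, hn1, hn2⟩ := Sep8.exists_poly_lt_two_pow P
  -- the number of accepting paths on `u ++ v` is the (u,v)-entry of `J - I`
  have hA : ∀ u v : Fin n → Bool,
      Sep8.nAcc (M n) (List.ofFn u ++ List.ofFn v) = if u = v then 0 else 1 := by
    intro u v
    refine (Sep8.card_accPaths (M n) _).symm.trans ?_
    by_cases h : u = v
    · subst h
      rw [if_pos rfl]
      have hrej := (hSolve n).2 _ ⟨u, rfl⟩
      have : IsEmpty {p : Fin ((List.ofFn u ++ List.ofFn u).length + 1) → (M n).Q //
          (M n).IsAccPath (List.ofFn u ++ List.ofFn u) p} :=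
        ⟨fun pp => hrej ⟨pp.1, pp.2⟩⟩
      exact @Nat.card_of_isEmpty _ this
    · rw [if_neg h]
      obtain ⟨p, hp⟩ := (hSolve n).1 _ ⟨u, v, h, rfl⟩
      have hsub := hUn n _ (Or.inl ⟨u, v, h, rfl⟩)
      rw [Nat.card_eq_one_iff_unique]
      exact ⟨⟨fun a b => Subtype.ext (hsub a.2 b.2)⟩, ⟨⟨p, hp⟩⟩⟩
  have hcardU : Fintype.card (Fin n → Bool) = 2^n := by
    simp [Fintype.card_fun]
  set A : Matrix (Fin n → Bool) (Fin n → Bool) ℚ :=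
    Matrix.of (fun u v => ((Sep8.nAcc (M n) (List.ofFn u ++ List.ofFn v) : ℕ) : ℚ)) with hAdef
  set B : Matrix (Fin n → Bool) ((M n).Q) ℚ :=
    Matrix.of (fun u r => ((Sep8.nPaths (M n) (M n).start (List.ofFn u) r : ℕ) : ℚ)) with hBdef
  set Cm : Matrix ((M n).Q) (Fin n → Bool) ℚ :=
    Matrix.of (fun r v => ((∑ q' : (M n).Q,
      if q' ∈ (M n).acc then Sep8.nPaths (M n) r (List.ofFn v) q' else 0 : ℕ) : ℚ)) with hCdef
  have hmul : A = B * Cm := by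
    ext u v
    rw [Matrix.mul_apply]
    show ((Sep8.nAcc (M n) (List.ofFn u ++ List.ofFn v) : ℕ) : ℚ) = _
    have hnat : Sep8.nAcc (M n) (List.ofFn u ++ List.ofFn v)
        = ∑ r : (M n).Q, Sep8.nPaths (M n) (M n).start (List.ofFn u) r *
            (∑ q' : (M n).Q,
              if q' ∈ (M n).acc then Sep8.nPaths (M n) r (List.ofFn v) q' else 0) := by
      unfold Sep8.nAcc
      have hsplit : ∀ q' : (M n).Q,
          Sep8.nPaths (M n) (M n).start (List.ofFn u ++ List.ofFn v) q'
          = ∑ r : (M n).Q, Sep8.nPaths (M n) (M n).start (List.ofFn u) r *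
              Sep8.nPaths (M n) r (List.ofFn v) q' :=
        fun q' => Sep8.nPaths_append (M n) q' (List.ofFn v) (List.ofFn u) (M n).start
      have push : ∀ q' : (M n).Q,
          (if q' ∈ (M n).acc then ∑ r : (M n).Q,
              Sep8.nPaths (M n) (M n).start (List.ofFn u) r *
                Sep8.nPaths (M n) r (List.ofFn v) q' else 0)
          = ∑ r : (M n).Q, if q' ∈ (M n).acc then
              Sep8.nPaths (M n) (M n).start (List.ofFn u) r *
                Sep8.nPaths (M n) r (List.ofFn v) q' else 0 := by
        intro q'
        split_ifs with h
        · rfl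
        · simp
      simp only [hsplit, push]
      rw [Finset.sum_comm]
      apply Finset.sum_congr rfl
      intro r _
      rw [Finset.mul_sum]
      apply Finset.sum_congr rfl
      intro q' _
      rw [mul_ite, mul_zero]
    rw [hnat, hBdef, hCdef]
    simp only [Matrix.of_apply]
    push_cast
    rfl
  have hAform : A = Matrix.of (fun _ _ => (1:ℚ)) - 1 := by
    ext u v
    show ((Sep8.nAcc (M n) (List.ofFn u ++ List.ofFn v) : ℕ) : ℚ) = _
    rw [hA u v, Matrix.sub_apply]
    by_cases h : u = v
    · subst h
      rw [if_pos rfl, Matrix.one_apply_eq]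
      norm_num
    · rw [if_neg h, Matrix.one_apply_ne h]
      norm_num
  have hJform : (Matrix.of (fun _ _ => (1:ℚ)) - 1 : Matrix (Fin n → Bool) (Fin n → Bool) ℚ)
      = -(1 + Matrix.replicateCol Unit (fun _ : (Fin n → Bool) => (-1:ℚ)) *
            Matrix.replicateRow Unit (fun _ : (Fin n → Bool) => (1:ℚ))) := by
    ext u v
    simp only [Matrix.sub_apply, Matrix.neg_apply, Matrix.add_apply, Matrix.mul_apply,
      Matrix.replicateCol_apply, Matrix.replicateRow_apply, Matrix.of_apply, Finset.univ_unique,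
      Finset.sum_singleton]
    ring
  have hdet : A.det ≠ 0 := by
    rw [hAform, hJform, Matrix.det_neg, Matrix.det_one_add_replicateCol_mul_replicateRow]
    have hdot : dotProduct (fun _ : (Fin n → Bool) => (1:ℚ))
        (fun _ : (Fin n → Bool) => (-1:ℚ)) = -(2^n : ℚ) := by
      unfold dotProduct
      simp only [one_mul, Finset.sum_const, Finset.card_univ, hcardU, nsmul_eq_mul]
      push_cast
      ring
    rw [hdot]
    have h2 : (1:ℚ) < 2^n := one_lt_pow₀ (by norm_num) (by omega)
    apply mul_ne_zero
    · apply pow_ne_zero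
      norm_num
    · intro hcon
      linarith
  have hrankA : A.rank = Fintype.card (Fin n → Bool) :=
    Matrix.rank_of_isUnit A ((Matrix.isUnit_iff_isUnit_det A).mpr (isUnit_iff_ne_zero.mpr hdet))
  have hrankle : A.rank ≤ Fintype.card ((M n).Q) := by
    rw [hmul]
    exact le_trans (Matrix.rank_mul_le_left B Cm) (Matrix.rank_le_card_width B)
  have hsc := hP n
  have : (2:ℕ)^n ≤ P.eval n := by
    calc (2:ℕ)^n = Fintype.card (Fin n → Bool) := hcardU.symm
    _ = A.rank := hrankA.symm
    _ ≤ Fintype.card ((M n).Q) := hrankle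
    _ = (M n).sc := rfl
    _ ≤ P.eval n := hsc
  omega
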